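/- Stability of the maximum entropy measure. Let 𝒱 = (v_i : i∈[n]) be a family of vectors in ℤ^D and z ∈ ℤ^D with ℳ^𝒱_z ≠ ∅. Let μ_p ∈ ℳ^𝒱_z be the maximum-entropy element (a product measure on {0,1}ⁿ with weights p = (p_i)), and let μ_p̃ ∈ ℳ^𝒱_z be any product measure with weights p̃ = (p̃_i). If ‖p − p̃‖₁ = Σ_{i∈[n]} |p_i − p̃_i| > δn for some δ > 0, then H(μ_p̃) < H(μ_p) − δ²n. -/

import Mathlib

open Finset

noncomputable section

/-- Evaluation of a family of vectors at a 0/1 vector: `𝒱(a) d = Σ_{i : a i = 1} v i d`. -/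
def bEval {n D : ℕ} (v : Fin n → Fin D → ℤ) (a : Fin n → Bool) (d : Fin D) : ℤ :=
  ∑ i, if a i then v i d else 0

/-- Product measure on `{0,1}ⁿ` with `p i` the probability of `1` in coordinate `i`. -/
def prodMeasB {n : ℕ} (p : Fin n → ℝ) (a : Fin n → Bool) : ℝ :=
  ∏ i, if a i then p i else 1 - p i

/-- Entropy (base 2) of a finitely supported measure. -/
noncomputable def entropy {α : Type*} [Fintype α] (μ : α → ℝ) : ℝ :=
  -∑ x, μ x * Real.logb 2 (μ x)

/-- `μ ∈ ℳ^𝒱_z`: a probability measure on `{0,1}ⁿ` with `E_{a∼μ} 𝒱(a) = z`. -/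
def MemM {n D : ℕ} (v : Fin n → Fin D → ℤ) (z : Fin D → ℤ)
    (μ : (Fin n → Bool) → ℝ) : Prop :=
  (∀ x, 0 ≤ μ x) ∧ (∑ x, μ x = 1) ∧
    ∀ d, ∑ a : Fin n → Bool, μ a * (bEval v a d : ℝ) = (z d : ℝ)

/- Auxiliary lemmas -/

lemma sum_prod_bool {n : ℕ} (f : Fin n → Bool → ℝ) :
    ∑ a : Fin n → Bool, ∏ i, f i (a i) = ∏ i, (f i true + f i false) := by
  have h := Finset.prod_univ_sum (fun _ : Fin n => (Finset.univ : Finset Bool)) f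
  simp only [Fintype.piFinset_univ] at h
  rw [← h]
  congr 1; ext i
  simp [Fintype.sum_bool]

lemma sum_prodMeasB {n : ℕ} (p : Fin n → ℝ) : ∑ a : Fin n → Bool, prodMeasB p a = 1 := by
  unfold prodMeasB
  rw [sum_prod_bool (fun i b => if b then p i else 1 - p i)]
  simp

lemma marginal_prodMeasB {n : ℕ} (p : Fin n → ℝ) (j : Fin n) :
    ∑ a : Fin n → Bool, (if a j then (1:ℝ) else 0) * prodMeasB p a = p j := by
  unfold prodMeasB
  have key : ∀ a : Fin n → Bool,
      (if a j then (1:ℝ) else 0) * ∏ i, (if a i then p i else 1 - p i)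
      = ∏ i, ((if i = j then (if a i then (1:ℝ) else 0) else 1) *
          (if a i then p i else 1 - p i)) := by
    intro a
    rw [Finset.prod_mul_distrib, Finset.prod_ite_eq' Finset.univ j
      (fun i => if a i then (1:ℝ) else 0)]
    simp
  simp only [key]
  rw [sum_prod_bool (fun i b => (if i = j then (if b then (1:ℝ) else 0) else 1) *
      (if b then p i else 1 - p i))]
  trans (∏ i, if i = j then p i else (1:ℝ))
  · exact Finset.prod_congr rfl (fun i _ => by by_cases h : i = j <;> simp [h])
  · rw [Finset.prod_ite_eq' Finset.univ j (fun i => p i)]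
    simp

lemma expect_prodMeasB {n D : ℕ} (v : Fin n → Fin D → ℤ) (p : Fin n → ℝ) (d : Fin D) :
    ∑ a : Fin n → Bool, prodMeasB p a * (bEval v a d : ℝ) = ∑ i, p i * (v i d : ℝ) := by
  have : ∀ a : Fin n → Bool, prodMeasB p a * (bEval v a d : ℝ)
      = ∑ i, (if a i then (1:ℝ) else 0) * prodMeasB p a * (v i d : ℝ) := by
    intro a
    unfold bEval
    push_cast
    rw [Finset.mul_sum]
    congr 1; ext i
    by_cases h : a i <;> simp [h]
  simp only [this]
  rw [Finset.sum_comm]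
  congr 1; ext i
  rw [← Finset.sum_mul, marginal_prodMeasB]

lemma prodMeasB_cons {n : ℕ} (p : Fin (n+1) → ℝ) (b : Bool) (a : Fin n → Bool) :
    prodMeasB p (Fin.cons b a) =
      (if b then p 0 else 1 - p 0) * prodMeasB (fun i => p i.succ) a := by
  unfold prodMeasB
  rw [Fin.prod_univ_succ]
  simp

lemma sum_negMulLog_prodMeasB {n : ℕ} (p : Fin n → ℝ) :
    ∑ a : Fin n → Bool, Real.negMulLog (prodMeasB p a)
      = ∑ i, (Real.negMulLog (p i) + Real.negMulLog (1 - p i)) := by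
  induction n with
  | zero => simp [prodMeasB]
  | succ n ih =>
    rw [← Equiv.sum_comp (Fin.consEquiv (fun _ : Fin (n+1) => Bool))
      (fun a => Real.negMulLog (prodMeasB p a))]
    have he : ∀ x : Bool × (Fin n → Bool),
        (Fin.consEquiv (fun _ : Fin (n+1) => Bool)) x = Fin.cons x.1 x.2 := fun _ => rfl
    rw [Fintype.sum_prod_type]
    simp only [he, prodMeasB_cons, Real.negMulLog_mul]
    rw [Fin.sum_univ_succ]
    have h1 := sum_prodMeasB (fun i : Fin n => p i.succ)
    have h2 := ih (fun i : Fin n => p i.succ)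
    simp only [Finset.sum_add_distrib, ← Finset.mul_sum, ← Finset.sum_mul]
    rw [h1, h2]
    simp [Fintype.sum_bool]
    try ring
    try rw [Finset.sum_add_distrib]
noncomputable section

lemma log_ratio_ge (u : ℝ) (h0 : 0 ≤ u) (h1 : u < 1) :
    2 * u ≤ Real.log (1 + u) - Real.log (1 - u) := by
  set G : ℝ → ℝ := fun x => Real.log (1 + x) - Real.log (1 - x) - 2 * x with hG
  have hmono : MonotoneOn G (Set.Ico (0:ℝ) 1) := by
    apply monotoneOn_of_deriv_nonneg (convex_Ico 0 1)
    · apply ContinuousOn.sub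
      apply ContinuousOn.sub
      · exact (Real.continuousOn_log.comp (by fun_prop) (by
          intro x hx; simp only [Set.mem_Ico] at hx
          simp only [Set.mem_compl_iff, Set.mem_singleton_iff]
          nlinarith [hx.1]))
      · exact (Real.continuousOn_log.comp (by fun_prop) (by
          intro x hx; simp only [Set.mem_Ico] at hx
          simp only [Set.mem_compl_iff, Set.mem_singleton_iff]
          nlinarith [hx.2]))
      · fun_prop
    · intro x hx
      rw [interior_Ico] at hx
      obtain ⟨hx0, hx1⟩ := hx
      have d1 : HasDerivAt G (1 / (1 + x) - (-1) / (1 - x) - 2) x := by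
        have ha : HasDerivAt (fun y : ℝ => 1 + y) 1 x := (hasDerivAt_id x).const_add 1
        have hb : HasDerivAt (fun y : ℝ => 1 - y) (-1) x := (hasDerivAt_id x).const_sub 1
        have hla : HasDerivAt (fun y : ℝ => Real.log (1 + y)) (1 / (1 + x)) x :=
          ha.log (by nlinarith)
        have hlb : HasDerivAt (fun y : ℝ => Real.log (1 - y)) ((-1) / (1 - x)) x :=
          hb.log (by nlinarith)
        simpa using (show HasDerivAt G _ x from (hla.sub hlb).sub ((hasDerivAt_id x).const_mul 2))
      exact d1.differentiableAt.differentiableWithinAt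
    · intro x hx
      rw [interior_Ico] at hx
      obtain ⟨hx0, hx1⟩ := hx
      have ha : HasDerivAt (fun y : ℝ => 1 + y) 1 x := (hasDerivAt_id x).const_add 1
      have hb : HasDerivAt (fun y : ℝ => 1 - y) (-1) x := (hasDerivAt_id x).const_sub 1
      have hla : HasDerivAt (fun y : ℝ => Real.log (1 + y)) (1 / (1 + x)) x :=
        ha.log (by nlinarith)
      have hlb : HasDerivAt (fun y : ℝ => Real.log (1 - y)) ((-1) / (1 - x)) x :=
        hb.log (by nlinarith)
      have d1 : HasDerivAt G (1 / (1 + x) - (-1) / (1 - x) - 2) x := by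
        have := (hla.sub hlb).sub (((hasDerivAt_id x).const_mul 2))
        simpa [hG, mul_comm] using (show HasDerivAt G _ x from this)
      rw [d1.deriv]
      have h1x : (0:ℝ) < 1 + x := by linarith
      have h2x : (0:ℝ) < 1 - x := by linarith
      have e : 1 / (1 + x) - (-1) / (1 - x) - 2 = (2 * x ^ 2) / ((1 + x) * (1 - x)) := by
        field_simp
        ring
      rw [e]
      positivity
  have h := hmono (Set.mem_Ico.2 ⟨le_refl 0, one_pos⟩) (Set.mem_Ico.2 ⟨h0, h1⟩) h0
  simp only [hG] at h
  simp only [add_zero, sub_zero, Real.log_one, mul_zero, sub_self] at h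
  linarith [h]

lemma negMulLog_pair (u : ℝ) (h0 : 0 ≤ u) (h1 : u ≤ 1) :
    Real.negMulLog (1 + u) + Real.negMulLog (1 - u) ≤ -u ^ 2 := by
  set f : ℝ → ℝ := fun x => -Real.negMulLog (1 + x) - Real.negMulLog (1 - x) - x ^ 2 with hf
  have hmono : MonotoneOn f (Set.Icc (0:ℝ) 1) := by
    apply monotoneOn_of_deriv_nonneg (convex_Icc 0 1)
    · apply Continuous.continuousOn
      fun_prop
    · intro x hx
      rw [interior_Icc] at hx
      obtain ⟨hx0, hx1⟩ := hx
      have ha : HasDerivAt (fun y : ℝ => 1 + y) 1 x := (hasDerivAt_id x).const_add 1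
      have hb : HasDerivAt (fun y : ℝ => 1 - y) (-1) x := (hasDerivAt_id x).const_sub 1
      have hna : HasDerivAt (fun y : ℝ => Real.negMulLog (1 + y))
          ((-Real.log (1 + x) - 1) * 1) x :=
        (Real.hasDerivAt_negMulLog (by nlinarith)).comp x ha
      have hnb : HasDerivAt (fun y : ℝ => Real.negMulLog (1 - y))
          ((-Real.log (1 - x) - 1) * (-1)) x :=
        (Real.hasDerivAt_negMulLog (by nlinarith)).comp x hb
      have d1 : HasDerivAt f
          (-((-Real.log (1 + x) - 1) * 1) - (-Real.log (1 - x) - 1) * (-1) - 2 * x) x := by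
        simpa using (show HasDerivAt f _ x from (hna.neg.sub hnb).sub (hasDerivAt_pow 2 x))
      exact d1.differentiableAt.differentiableWithinAt
    · intro x hx
      rw [interior_Icc] at hx
      obtain ⟨hx0, hx1⟩ := hx
      have ha : HasDerivAt (fun y : ℝ => 1 + y) 1 x := (hasDerivAt_id x).const_add 1
      have hb : HasDerivAt (fun y : ℝ => 1 - y) (-1) x := (hasDerivAt_id x).const_sub 1
      have hna : HasDerivAt (fun y : ℝ => Real.negMulLog (1 + y))
          ((-Real.log (1 + x) - 1) * 1) x :=
        (Real.hasDerivAt_negMulLog (by nlinarith)).comp x ha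
      have hnb : HasDerivAt (fun y : ℝ => Real.negMulLog (1 - y))
          ((-Real.log (1 - x) - 1) * (-1)) x :=
        (Real.hasDerivAt_negMulLog (by nlinarith)).comp x hb
      have d1 : HasDerivAt f
          (-((-Real.log (1 + x) - 1) * 1) - (-Real.log (1 - x) - 1) * (-1) - 2 * x) x := by
        simpa using (show HasDerivAt f _ x from (hna.neg.sub hnb).sub (hasDerivAt_pow 2 x))
      rw [d1.deriv]
      have := log_ratio_ge x hx0.le hx1
      linarith
  have h := hmono (Set.mem_Icc.2 ⟨le_refl 0, zero_le_one⟩) (Set.mem_Icc.2 ⟨h0, h1⟩) h0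
  simp only [hf, add_zero, sub_zero, Real.negMulLog_one] at h
  simp only [Real.negMulLog] at h ⊢
  nlinarith [h]

lemma phi_ineq (s d : ℝ) (hs : 0 < s) (hd : 0 ≤ d) (hds : d ≤ s) :
    d ^ 2 / s ≤ 2 * Real.negMulLog s - Real.negMulLog (s - d) - Real.negMulLog (s + d) := by
  have hu0 : 0 ≤ d / s := div_nonneg hd hs.le
  have hu1 : d / s ≤ 1 := (div_le_one hs).2 hds
  have e1 : s - d = s * (1 - d / s) := by field_simp
  have e2 : s + d = s * (1 + d / s) := by field_simp
  rw [e1, e2, Real.negMulLog_mul, Real.negMulLog_mul]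
  have key := negMulLog_pair (d / s) hu0 hu1
  have e3 : d ^ 2 / s = s * (d / s) ^ 2 := by field_simp
  rw [e3]
  nlinarith [key, Real.negMulLog_one, hs]

noncomputable def gfun (t : ℝ) : ℝ := Real.negMulLog t + Real.negMulLog (1 - t)

lemma coord_le (x y : ℝ) (hx0 : 0 ≤ x) (hy1 : y ≤ 1) (hxy : x ≤ y) :
    (gfun x + gfun y) / 2 + (x - y) ^ 2 / 2 ≤ gfun ((x + y) / 2) := by
  rcases eq_or_lt_of_le hxy with h | h
  · subst h
    have : (x + x) / 2 = x := by ring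
    rw [this]
    simp
  · have hm : 0 < (x + y) / 2 := by linarith
    have hm1 : 0 < 1 - (x + y) / 2 := by linarith
    have hd : 0 ≤ (y - x) / 2 := by linarith
    have h1 := phi_ineq ((x + y) / 2) ((y - x) / 2) hm hd (by linarith)
    have h2 := phi_ineq (1 - (x + y) / 2) ((y - x) / 2) hm1 hd (by linarith)
    rw [show (x + y) / 2 - (y - x) / 2 = x from by ring,
        show (x + y) / 2 + (y - x) / 2 = y from by ring] at h1
    rw [show 1 - (x + y) / 2 - (y - x) / 2 = 1 - y from by ring,
        show 1 - (x + y) / 2 + (y - x) / 2 = 1 - x from by ring] at h2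
    set m := (x + y) / 2
    set d := (y - x) / 2
    have hmm : 0 < m * (1 - m) := by positivity
    have hle : m * (1 - m) ≤ 1 / 4 := by nlinarith [sq_nonneg (1 - 2 * m)]
    have h3 : 4 * d ^ 2 ≤ d ^ 2 / (m * (1 - m)) := by
      rw [le_div_iff₀ hmm]
      nlinarith [mul_nonneg (sub_nonneg.2 hle) (sq_nonneg d)]
    have hsum : d ^ 2 / m + d ^ 2 / (1 - m) = d ^ 2 / (m * (1 - m)) := by
      field_simp
      ring
    have h5 : (x - y) ^ 2 = 4 * d ^ 2 := by
      simp only [d]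
      ring
    simp only [gfun]
    linarith

lemma coord_ineq (x y : ℝ) (hx : x ∈ Set.Icc (0:ℝ) 1) (hy : y ∈ Set.Icc (0:ℝ) 1) :
    (gfun x + gfun y) / 2 + (x - y) ^ 2 / 2 ≤ gfun ((x + y) / 2) := by
  rcases le_total x y with h | h
  · exact coord_le x y hx.1 hy.2 h
  · have := coord_le y x hy.1 hx.2 h
    rw [show (y + x) / 2 = (x + y) / 2 from by ring] at this
    linarith [this]

lemma entropy_prodMeasB {n : ℕ} (p : Fin n → ℝ) :
    entropy (prodMeasB p) = (∑ i, gfun (p i)) / Real.log 2 := by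
  unfold entropy
  have : ∀ a : Fin n → Bool, prodMeasB p a * Real.logb 2 (prodMeasB p a)
      = -(Real.negMulLog (prodMeasB p a) / Real.log 2) := by
    intro a
    simp only [Real.logb, Real.negMulLog]
    ring
  simp only [this]
  rw [Finset.sum_neg_distrib, neg_neg, ← Finset.sum_div, sum_negMulLog_prodMeasB]
  rfl

/-- **Stability of the maximum entropy measure.**  If `μ_p` is the maximum-entropy
element of `ℳ^𝒱_z`, `μ_p̃ ∈ ℳ^𝒱_z` is a product measure, and `‖p − p̃‖₁ > δn`,
then `H(μ_p̃) < H(μ_p) − δ²n`. -/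
theorem stability_of_max_entropy
    (n D : ℕ) (v : Fin n → Fin D → ℤ) (z : Fin D → ℤ)
    (p ptilde : Fin n → ℝ)
    (hp : ∀ i, p i ∈ Set.Icc (0:ℝ) 1) (hpt : ∀ i, ptilde i ∈ Set.Icc (0:ℝ) 1)
    (hpM : MemM v z (prodMeasB p))
    (hmax : ∀ μ, MemM v z μ → entropy μ ≤ entropy (prodMeasB p))
    (hptM : MemM v z (prodMeasB ptilde))
    (δ : ℝ) (hδ : 0 < δ)
    (hfar : δ * n < ∑ i, |p i - ptilde i|) :
    entropy (prodMeasB ptilde) < entropy (prodMeasB p) - δ ^ 2 * n := by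
  set q : Fin n → ℝ := fun i => (p i + ptilde i) / 2 with hq
  -- q is in ℳ
  have hqM : MemM v z (prodMeasB q) := by
    refine ⟨?_, sum_prodMeasB q, ?_⟩
    · intro a
      apply Finset.prod_nonneg
      intro i _
      have h1 := hp i; have h2 := hpt i
      simp only [Set.mem_Icc] at h1 h2
      by_cases h : a i <;> simp [h, hq] <;> [skip; skip] <;> linarith
    · intro d
      rw [expect_prodMeasB]
      have ep : ∑ i, p i * (v i d : ℝ) = (z d : ℝ) := by
        rw [← expect_prodMeasB]; exact hpM.2.2 d
      have ept : ∑ i, ptilde i * (v i d : ℝ) = (z d : ℝ) := by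
        rw [← expect_prodMeasB]; exact hptM.2.2 d
      have : ∀ i, q i * (v i d : ℝ)
          = p i * (v i d : ℝ) / 2 + ptilde i * (v i d : ℝ) / 2 := by
        intro i; simp only [hq]; ring
      simp only [this]
      rw [Finset.sum_add_distrib, ← Finset.sum_div, ← Finset.sum_div, ep, ept]
      ring
  have hlog : (0:ℝ) < Real.log 2 := Real.log_pos one_lt_two
  have hlog1 : Real.log 2 < 1 := by
    have := Real.log_two_lt_d9
    linarith
  -- entropies in terms of gfun sums
  have hGq : ∑ i, gfun (q i) ≤ ∑ i, gfun (p i) := by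
    have := hmax _ hqM
    rw [entropy_prodMeasB, entropy_prodMeasB] at this
    exact (div_le_div_iff_of_pos_right hlog).1 this
  -- coordinatewise strong concavity
  have hcoord : ∑ i, ((gfun (p i) + gfun (ptilde i)) / 2 + (p i - ptilde i) ^ 2 / 2)
      ≤ ∑ i, gfun (q i) :=
    Finset.sum_le_sum fun i _ => coord_ineq (p i) (ptilde i) (hp i) (hpt i)
  set S : ℝ := ∑ i, (p i - ptilde i) ^ 2 with hS
  have hsum : ∑ i, ((gfun (p i) + gfun (ptilde i)) / 2 + (p i - ptilde i) ^ 2 / 2)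
      = (∑ i, gfun (p i)) / 2 + (∑ i, gfun (ptilde i)) / 2 + S / 2 := by
    have e1 : ∑ x, (gfun (p x) + gfun (ptilde x)) / 2
        = (∑ i, gfun (p i)) / 2 + (∑ i, gfun (ptilde i)) / 2 := by
      rw [← Finset.sum_div, Finset.sum_add_distrib]
      ring
    have e2 : ∑ x, (p x - ptilde x) ^ 2 / 2 = S / 2 := by
      rw [← Finset.sum_div]
    rw [Finset.sum_add_distrib, e1, e2]
  have hkey : ∑ i, gfun (ptilde i) ≤ ∑ i, gfun (p i) - S := by
    rw [hsum] at hcoord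
    linarith
  -- lower bound on S
  have hnpos : 0 < n := by
    rcases Nat.eq_zero_or_pos n with h | h
    · subst h
      simp only [Nat.cast_zero, mul_zero, Finset.univ_eq_empty, Finset.sum_empty] at hfar
      exact absurd hfar (lt_irrefl 0)
    · exact h
  have hCS : (∑ i, |p i - ptilde i|) ^ 2 ≤ (n : ℝ) * S := by
    have := sq_sum_le_card_mul_sum_sq (s := (Finset.univ : Finset (Fin n)))
      (f := fun i => |p i - ptilde i|)
    simpa [sq_abs, hS] using this
  have hSgt : δ ^ 2 * n < S := by
    have h1 : (δ * n) ^ 2 < (∑ i, |p i - ptilde i|) ^ 2 := by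
      apply pow_lt_pow_left₀ hfar (by positivity)
      norm_num
    have h2 : δ ^ 2 * n * n < (n : ℝ) * S := by
      nlinarith [h1, hCS]
    have hn : (0:ℝ) < n := by exact_mod_cast hnpos
    nlinarith [h2, hn]
  have hSpos : 0 < S := lt_trans (by positivity) hSgt
  -- conclude
  rw [entropy_prodMeasB, entropy_prodMeasB]
  have step1 : (∑ i, gfun (ptilde i)) / Real.log 2
      ≤ ((∑ i, gfun (p i)) - S) / Real.log 2 := by
    exact (div_le_div_iff_of_pos_right hlog).2 (by linarith [hkey])
  have step2 : δ ^ 2 * n < S / Real.log 2 := by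
    rw [lt_div_iff₀ hlog]
    nlinarith [hSgt, hlog1, hlog, sq_nonneg δ, Nat.cast_nonneg (α := ℝ) n]
  have step3 : ((∑ i, gfun (p i)) - S) / Real.log 2
      = (∑ i, gfun (p i)) / Real.log 2 - S / Real.log 2 := by ring
  linarith [step1, step2, step3.le, step3.ge]
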